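/- Suppose d > 1 and κ > 1, and for each x in an index set S there is a continuous increasing function m_x : [0,∞) → [0,∞) with m_x(0) = 0, m_x(1) = 1, and multipliers λ_x with |λ_x| ≥ κ, satisfying the transformation law d · m_x(r) = m_{fx}(|λ_x| r) for a self-map f of S. Then for all x ∈ S and all r ≥ 1, m_x(r) ≤ C r^β where β = log d / log κ and C = κ^β = d. -/

import Mathlib

/-- Theorem 1.2, (4) ⇒ (5): if `d·m_x(r) = m_{fx}(|λ_x| r)` with `m_x(1) = 1` and
`|λ_x| ≥ κ > 1`, then `m_x(r) ≤ C r^β` for all `r ≥ 1`, where `β = log d / log κ`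
and `C = κ^β = d`. -/
theorem stmt2 {S : Type*} (f : S ≃ S) (m : S → ℝ → ℝ) (lam : S → ℂ)
    (d κ : ℝ) (hd : 1 < d) (hκ : 1 < κ)
    (hcont : ∀ x, Continuous (m x)) (hmono : ∀ x, Monotone (m x))
    (hnonneg : ∀ x r, 0 ≤ m x r)
    (h0 : ∀ x, m x 0 = 0) (h1 : ∀ x, m x 1 = 1)
    (hlam : ∀ x, κ ≤ ‖lam x‖)
    (htrans : ∀ x r, d * m x r = m (f x) (‖lam x‖ * r)) :
    ∀ x, ∀ r : ℝ, 1 ≤ r → m x r ≤ d * r ^ (Real.log d / Real.log κ) := by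
  have hκ0 : (0:ℝ) < κ := lt_trans one_pos hκ
  have hd0 : (0:ℝ) < d := lt_trans one_pos hd
  -- single step
  have step : ∀ x s, 0 ≤ s → m x s ≤ d * m (f.symm x) (s / κ) := by
    intro x s hs
    set y := f.symm x with hy
    have hL : κ ≤ ‖lam y‖ := hlam y
    have hL0 : (0:ℝ) < ‖lam y‖ := lt_of_lt_of_le hκ0 hL
    have key := htrans y (s / ‖lam y‖)
    rw [mul_div_cancel₀ _ (ne_of_gt hL0), f.apply_symm_apply] at key
    have hle : s / ‖lam y‖ ≤ s / κ :=
      div_le_div_of_nonneg_left hs hκ0 hL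
    calc m x s = d * m y (s / ‖lam y‖) := key.symm
      _ ≤ d * m y (s / κ) := by
          exact mul_le_mul_of_nonneg_left (hmono y hle) (le_of_lt hd0)
  -- iterate
  have iter : ∀ n : ℕ, ∀ x, ∀ s : ℝ, 0 ≤ s →
      m x s ≤ d ^ n * m (f.symm^[n] x) (s / κ ^ n) := by
    intro n
    induction n with
    | zero => intro x s hs; simp
    | succ n ih =>
      intro x s hs
      have h1' := step x s hs
      have h2' := ih (f.symm x) (s / κ) (div_nonneg hs (le_of_lt hκ0))
      have heq : s / κ / κ ^ n = s / κ ^ (n + 1) := by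
        rw [div_div, pow_succ, mul_comm]
      have hfun : f.symm^[n] (f.symm x) = f.symm^[n + 1] x := by
        rw [Function.iterate_succ_apply]
      calc m x s ≤ d * m (f.symm x) (s / κ) := h1'
        _ ≤ d * (d ^ n * m (f.symm^[n] (f.symm x)) (s / κ / κ ^ n)) :=
            mul_le_mul_of_nonneg_left h2' (le_of_lt hd0)
        _ = d ^ (n + 1) * m (f.symm^[n + 1] x) (s / κ ^ (n + 1)) := by
            rw [heq, hfun, pow_succ]; ring
  intro x r hr
  have hr0 : (0:ℝ) < r := lt_of_lt_of_le one_pos hr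
  have hlogκ : (0:ℝ) < Real.log κ := Real.log_pos hκ
  have hlogr : (0:ℝ) ≤ Real.log r := Real.log_nonneg hr
  set a := Real.log r / Real.log κ with ha
  have ha0 : 0 ≤ a := div_nonneg hlogr (le_of_lt hlogκ)
  set n := ⌈a⌉₊ with hn
  -- r ≤ κ^n
  have hrκ : r ≤ κ ^ n := by
    have h1' : Real.log r ≤ n * Real.log κ := by
      have : a ≤ (n : ℝ) := Nat.le_ceil a
      calc Real.log r = a * Real.log κ := by
            rw [ha, div_mul_cancel₀ _ (ne_of_gt hlogκ)]
        _ ≤ n * Real.log κ := mul_le_mul_of_nonneg_right this (le_of_lt hlogκ)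
    have := Real.exp_le_exp.mpr h1'
    rwa [Real.exp_log hr0, ← Real.log_pow, Real.exp_log (pow_pos hκ0 n)] at this
  have h2' : r / κ ^ n ≤ 1 := by
    rw [div_le_one (pow_pos hκ0 n)]; exact hrκ
  have hmle : m (f.symm^[n] x) (r / κ ^ n) ≤ 1 := by
    have := hmono (f.symm^[n] x) h2'
    rwa [h1 (f.symm^[n] x)] at this
  have key : m x r ≤ d ^ n := by
    calc m x r ≤ d ^ n * m (f.symm^[n] x) (r / κ ^ n) := iter n x r (le_of_lt hr0)
      _ ≤ d ^ n * 1 := mul_le_mul_of_nonneg_left hmle (pow_nonneg (le_of_lt hd0) n)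
      _ = d ^ n := mul_one _
  -- d^n ≤ d * r^a'
  have hna : (n : ℝ) ≤ a + 1 := le_of_lt (Nat.ceil_lt_add_one ha0)
  have hdn : (d:ℝ) ^ n = d ^ ((n:ℝ) : ℝ) := by
    rw [Real.rpow_natCast]
  have hmono' : d ^ ((n:ℝ)) ≤ d ^ (a + 1) :=
    Real.rpow_le_rpow_of_exponent_le (le_of_lt hd) hna
  have hconv : d ^ (a + 1) = d * r ^ (Real.log d / Real.log κ) := by
    rw [Real.rpow_add hd0, Real.rpow_one]
    rw [Real.rpow_def_of_pos hd0, Real.rpow_def_of_pos hr0, ha]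
    ring_nf
  calc m x r ≤ d ^ n := key
    _ = d ^ ((n:ℝ)) := hdn
    _ ≤ d ^ (a + 1) := hmono'
    _ = d * r ^ (Real.log d / Real.log κ) := hconv
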